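/- If p, q ∈ (0,1) satisfy p + q > 1, then G(p) + G(q) > 1. -/

import Mathlib

noncomputable def G (x : ℝ) : ℝ := x^4 * (15 - 4*x - 10*x^2 / (1 - 2*x*(1-x)))

lemma dpos (x : ℝ) : 0 < 1 - 2*x*(1-x) := by nlinarith [sq_nonneg (2*x-1)]

lemma G_symm (x : ℝ) : G x + G (1-x) = 1 := by
  have hd : (1 - 2*x*(1-x)) ≠ 0 := (dpos x).ne'
  have he : 1 - 2*(1-x)*(1-(1-x)) = 1 - 2*x*(1-x) := by ring
  unfold G
  rw [he]
  set d := 1 - 2*x*(1-x) with hdd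
  field_simp
  rw [hdd]
  ring

lemma Qpos (a b : ℝ) (ha : 0 < a) (hb : 0 < b) (ha1 : a < 1) (hb1 : b < 1) :
    0 < 15*b^3 - 34*b^4 + 28*b^5 - 8*b^6
      + a*(15*b^2 - 64*b^3 + 96*b^4 - 64*b^5 + 16*b^6)
      + a^2*(15*b - 64*b^2 + 126*b^3 - 132*b^4 + 72*b^5 - 16*b^6)
      + a^3*(15 - 64*b + 126*b^2 - 132*b^3 + 72*b^4 - 16*b^5)
      + a^4*(-34 + 96*b - 132*b^2 + 72*b^3 - 16*b^4)
      + a^5*(28 - 64*b + 72*b^2 - 16*b^3)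
      + a^6*(-8 + 16*b - 16*b^2) := by
  have ha' : 0 < 1 - a := by linarith
  have hb' : 0 < 1 - b := by linarith
  linarith [mul_pos (mul_pos (mul_pos (pow_pos ha 0) (pow_pos ha' 6)) (pow_pos hb 3)) (pow_pos hb' 3), mul_pos (mul_pos (mul_pos (pow_pos ha 0) (pow_pos ha' 6)) (pow_pos hb 4)) (pow_pos hb' 2), mul_pos (mul_pos (mul_pos (pow_pos ha 0) (pow_pos ha' 6)) (pow_pos hb 5)) (pow_pos hb' 1), mul_pos (mul_pos (mul_pos (pow_pos ha 0) (pow_pos ha' 6)) (pow_pos hb 6)) (pow_pos hb' 0), mul_pos (mul_pos (mul_pos (pow_pos ha 1) (pow_pos ha' 5)) (pow_pos hb 2)) (pow_pos hb' 4), mul_pos (mul_pos (mul_pos (pow_pos ha 1) (pow_pos ha' 5)) (pow_pos hb 3)) (pow_pos hb' 3), mul_pos (mul_pos (mul_pos (pow_pos ha 1) (pow_pos ha' 5)) (pow_pos hb 4)) (pow_pos hb' 2), mul_pos (mul_pos (mul_pos (pow_pos ha 1) (pow_pos ha' 5)) (pow_pos hb 5)) (pow_pos hb' 1), mul_pos (mul_pos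 (mul_pos (pow_pos ha 1) (pow_pos ha' 5)) (pow_pos hb 6)) (pow_pos hb' 0), mul_pos (mul_pos (mul_pos (pow_pos ha 2) (pow_pos ha' 4)) (pow_pos hb 1)) (pow_pos hb' 5), mul_pos (mul_pos (mul_pos (pow_pos ha 2) (pow_pos ha' 4)) (pow_pos hb 2)) (pow_pos hb' 4), mul_pos (mul_pos (mul_pos (pow_pos ha 2) (pow_pos ha' 4)) (pow_pos hb 3)) (pow_pos hb' 3), mul_pos (mul_pos (mul_pos (pow_pos ha 2) (pow_pos ha' 4)) (pow_pos hb 4)) (pow_pos hb' 2), mul_pos (mul_pos (mul_pos (pow_pos ha 2) (pow_pos ha' 4)) (pow_pos hb 5)) (pow_pos hb' 1), mul_pos (mul_pos (mul_pos (pow_pos ha 2) (pow_pos ha' 4)) (pow_pos hb 6)) (pow_pos hb' 0), mul_pos (mul_pos (mul_pos (pow_pos ha 3) (pow_pos ha' 3)) (pow_pos hb 0)) (pow_pos hb' 6), mul_pos (mul_pos (mul_pos (pow_pos ha 3) (pow_pos ha' 3)) (pow_pos hb 1)) (pow_pos hb' 5), mul_pos (mul_pos (mul_pos (pow_pos ha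 3) (pow_pos ha' 3)) (pow_pos hb 2)) (pow_pos hb' 4), mul_pos (mul_pos (mul_pos (pow_pos ha 3) (pow_pos ha' 3)) (pow_pos hb 3)) (pow_pos hb' 3), mul_pos (mul_pos (mul_pos (pow_pos ha 3) (pow_pos ha' 3)) (pow_pos hb 4)) (pow_pos hb' 2), mul_pos (mul_pos (mul_pos (pow_pos ha 3) (pow_pos ha' 3)) (pow_pos hb 5)) (pow_pos hb' 1), mul_pos (mul_pos (mul_pos (pow_pos ha 3) (pow_pos ha' 3)) (pow_pos hb 6)) (pow_pos hb' 0), mul_pos (mul_pos (mul_pos (pow_pos ha 4) (pow_pos ha' 2)) (pow_pos hb 0)) (pow_pos hb' 6), mul_pos (mul_pos (mul_pos (pow_pos ha 4) (pow_pos ha' 2)) (pow_pos hb 1)) (pow_pos hb' 5), mul_pos (mul_pos (mul_pos (pow_pos ha 4) (pow_pos ha' 2)) (pow_pos hb 2)) (pow_pos hb' 4), mul_pos (mul_pos (mul_pos (pow_pos ha 4) (pow_pos ha' 2)) (pow_pos hb 3)) (pow_pos hb' 3), mul_pos (mul_pos (mul_pos (pow_pos ha 4) (pow_pos ha' 2))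 (pow_pos hb 4)) (pow_pos hb' 2), mul_pos (mul_pos (mul_pos (pow_pos ha 4) (pow_pos ha' 2)) (pow_pos hb 5)) (pow_pos hb' 1), mul_pos (mul_pos (mul_pos (pow_pos ha 5) (pow_pos ha' 1)) (pow_pos hb 0)) (pow_pos hb' 6), mul_pos (mul_pos (mul_pos (pow_pos ha 5) (pow_pos ha' 1)) (pow_pos hb 1)) (pow_pos hb' 5), mul_pos (mul_pos (mul_pos (pow_pos ha 5) (pow_pos ha' 1)) (pow_pos hb 2)) (pow_pos hb' 4), mul_pos (mul_pos (mul_pos (pow_pos ha 5) (pow_pos ha' 1)) (pow_pos hb 3)) (pow_pos hb' 3), mul_pos (mul_pos (mul_pos (pow_pos ha 5) (pow_pos ha' 1)) (pow_pos hb 4)) (pow_pos hb' 2), mul_pos (mul_pos (mul_pos (pow_pos ha 6) (pow_pos ha' 0)) (pow_pos hb 0)) (pow_pos hb' 6), mul_pos (mul_pos (mul_pos (pow_pos ha 6) (pow_pos ha' 0)) (pow_pos hb 1)) (pow_pos hb' 5), mul_pos (mul_pos (mul_pos (pow_pos ha 6) (pow_pos ha' 0)) (pow_pos hb 2)) (pow_pos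 hb' 4), mul_pos (mul_pos (mul_pos (pow_pos ha 6) (pow_pos ha' 0)) (pow_pos hb 3)) (pow_pos hb' 3)]

lemma G_mono (a b : ℝ) (ha : 0 < a) (hab : a < b) (hb1 : b < 1) : G a < G b := by
  have hda := dpos a
  have hdb := dpos b
  have hQ := Qpos a b ha (ha.trans hab) (hab.trans hb1) hb1
  rw [← sub_pos]
  unfold G
  have key : b^4 * (15 - 4*b - 10*b^2 / (1 - 2*b*(1-b))) - a^4 * (15 - 4*a - 10*a^2 / (1 - 2*a*(1-a)))
      = ((b - a) * (15*b^3 - 34*b^4 + 28*b^5 - 8*b^6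
      + a*(15*b^2 - 64*b^3 + 96*b^4 - 64*b^5 + 16*b^6)
      + a^2*(15*b - 64*b^2 + 126*b^3 - 132*b^4 + 72*b^5 - 16*b^6)
      + a^3*(15 - 64*b + 126*b^2 - 132*b^3 + 72*b^4 - 16*b^5)
      + a^4*(-34 + 96*b - 132*b^2 + 72*b^3 - 16*b^4)
      + a^5*(28 - 64*b + 72*b^2 - 16*b^3)
      + a^6*(-8 + 16*b - 16*b^2))) / ((1 - 2*a*(1-a)) * (1 - 2*b*(1-b))) := by
    set da := 1 - 2*a*(1-a) with hdda
    set db := 1 - 2*b*(1-b) with hddb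
    field_simp
    rw [hdda, hddb]
    ring
  rw [key]
  exact div_pos (mul_pos (sub_pos.2 hab) hQ) (mul_pos hda hdb)

theorem G_sum_gt_one (p q : ℝ) (hp : p ∈ Set.Ioo (0:ℝ) 1) (hq : q ∈ Set.Ioo (0:ℝ) 1)
    (hpq : p + q > 1) : G p + G q > 1 := by
  have h1 : G (1 - p) < G q := G_mono (1-p) q (by linarith [hp.2]) (by linarith) hq.2
  have h2 := G_symm p
  linarith
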